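/- Suppose F : ℍⁿ → X satisfies all hypotheses of the criteria lemma, and additionally there exists a constant C₀ such that for every vertical triangle T (over horizontal coordinates x ≠ x', with midpoint of the third side at height t(r)) the displaced height satisfies t(r) - h(T) ≤ C₀. Then for any p = (x,t(p)), q = (x',t(q)) with t(p) ≥ h(T) - C₁ (where C₁ = 2C₀ + 5Δ + 1), letting q' = (x', max{t(p),t(r)}), one has |d_ℍ(p,q) - |t(q') - t(q)|| ≤ C₀ + C₁ + 2 and |d_X(F(p),F(q)) - |t(q')-t(q)|| ≤ C₀ + C₁ + 2R/ε + R. -/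

import Mathlib

/-- The inverse hyperbolic cosine. -/
noncomputable def arcosh (x : ℝ) : ℝ := Real.log (x + Real.sqrt (x ^ 2 - 1))

/-- Hyperbolic distance in the exponential model `ℝ^{n-1} × ℝ` with metric
`ds² = e^{-2t}|dx|² + dt²` (closed formula). -/
noncomputable def hypDist {m : ℕ} (p q : EuclideanSpace ℝ (Fin m) × ℝ) : ℝ :=
  arcosh (1 + (dist p.1 q.1 ^ 2 + (Real.exp p.2 - Real.exp q.2) ^ 2) /
    (2 * Real.exp p.2 * Real.exp q.2))

lemma arcosh_cosh (a : ℝ) (ha : 0 ≤ a) : arcosh (Real.cosh a) = a := by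
  unfold arcosh
  have h1 : Real.cosh a ^ 2 - 1 = Real.sinh a ^ 2 := by
    have := Real.cosh_sq_sub_sinh_sq a; linarith
  rw [h1, Real.sqrt_sq (Real.sinh_nonneg_iff.mpr ha), Real.cosh_add_sinh, Real.log_exp]

lemma arcosh_mono {u v : ℝ} (hu : 1 ≤ u) (huv : u ≤ v) : arcosh u ≤ arcosh v := by
  unfold arcosh
  have h : Real.sqrt (u ^ 2 - 1) ≤ Real.sqrt (v ^ 2 - 1) :=
    Real.sqrt_le_sqrt (by nlinarith)
  exact Real.log_le_log (by positivity) (by linarith)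

lemma arcosh_le_log (v : ℝ) (hv : 1 ≤ v) : arcosh v ≤ Real.log (2 * v) := by
  unfold arcosh
  have h : Real.sqrt (v ^ 2 - 1) ≤ v := by
    calc Real.sqrt (v ^ 2 - 1) ≤ Real.sqrt (v ^ 2) := Real.sqrt_le_sqrt (by linarith)
    _ = v := Real.sqrt_sq (by linarith)
  exact Real.log_le_log (by positivity) (by linarith)


/-- Case 1 of the criteria lemma: with a uniform bound `C₀` on
`t(r) - h(T)` over the vertical triangle `T` over `x ≠ x'`, for `p = (x,t(p))`,
`q = (x',t(q))` with `t(p) ≥ h(T) - C₁` where `C₁ = 2C₀ + 5Δ + 1`, and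
`q' = (x', max{t(p), t(r)})`, both `d_ℍ(p,q)` and `d_X(F(p),F(q))` are estimated by
`|t(q') - t(q)|` up to the stated additive errors. -/
theorem criteria_case_one {X : Type*} [MetricSpace X] {m : ℕ}
    (δ ε R : ℝ) (hδ : 0 < δ) (hε : 0 < ε) (hR : 0 < R)
    (F : EuclideanSpace ℝ (Fin m) × ℝ → X)
    (h1 : ∀ (x : EuclideanSpace ℝ (Fin m)) (s t : ℝ),
      dist (F (x, s)) (F (x, t)) = |s - t|)
    (h2 : ∀ x x' : EuclideanSpace ℝ (Fin m), x ≠ x' → ∃ Rside : ℝ → X,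
      (∀ s t : ℝ, dist (Rside s) (Rside t) = |s - t|) ∧
      (∀ s : ℝ, Metric.infDist (F (x, s))
        (Set.range (fun u => F (x', u)) ∪ Set.range Rside) ≤ δ) ∧
      (∀ s : ℝ, Metric.infDist (F (x', s))
        (Set.range (fun u => F (x, u)) ∪ Set.range Rside) ≤ δ) ∧
      (∀ s : ℝ, Metric.infDist (Rside s)
        (Set.range (fun u => F (x, u)) ∪ Set.range (fun u => F (x', u))) ≤ δ))
    (h3 : ∀ (x x' : EuclideanSpace ℝ (Fin m)) (t : ℝ),
      dist (F (x, t)) (F (x', t)) ≤ (R / ε) * (Real.exp (-t) * dist x x') + R)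
    (Δ : ℝ) (hΔ : Δ = max (3 * δ) (2 * R / ε + R))
    (x x' : EuclideanSpace ℝ (Fin m)) (hxx : x ≠ x')
    -- the height of the midpoint (highest point) of the third side of the triangle
    (tr : ℝ) (htr : tr = Real.log (dist x x' / 2))
    -- the displaced height of the triangle
    (hT : ℝ)
    (hmem : Metric.infDist (F (x, hT)) (Set.range fun s => F (x', s)) ≤ Δ ∨
      Metric.infDist (F (x', hT)) (Set.range fun s => F (x, s)) ≤ Δ)
    (hmin : ∀ t : ℝ,
      (Metric.infDist (F (x, t)) (Set.range fun s => F (x', s)) ≤ Δ ∨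
        Metric.infDist (F (x', t)) (Set.range fun s => F (x, s)) ≤ Δ) → hT ≤ t)
    (C₀ : ℝ) (hC0 : tr - hT ≤ C₀)
    (C₁ : ℝ) (hC1 : C₁ = 2 * C₀ + 5 * Δ + 1)
    (tp tq : ℝ) (hcase : tp ≥ hT - C₁) :
    |hypDist (x, tp) (x', tq) - (|max tp tr - tq|)| ≤ C₀ + C₁ + 2 ∧
    |dist (F (x, tp)) (F (x', tq)) - (|max tp tr - tq|)| ≤
      C₀ + C₁ + 2 * R / ε + R := by
  set D := dist x x' with hDdef
  have hD : 0 < D := dist_pos.mpr hxx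
  have hexptr : Real.exp tr = D / 2 := by rw [htr, Real.exp_log (by positivity)]
  have hRε : 0 < 2 * R / ε + R := by positivity
  have hΔR : 2 * R / ε + R ≤ Δ := hΔ ▸ le_max_right _ _
  have hΔ0 : 0 < Δ := lt_of_lt_of_le hRε hΔR
  -- hT ≤ tr
  have hhT : hT ≤ tr := by
    apply hmin tr
    left
    calc Metric.infDist (F (x, tr)) (Set.range fun s => F (x', s))
        ≤ dist (F (x, tr)) (F (x', tr)) := Metric.infDist_le_dist_of_mem ⟨tr, rfl⟩
      _ ≤ (R / ε) * (Real.exp (-tr) * D) + R := h3 x x' tr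
      _ = 2 * R / ε + R := by
          rw [Real.exp_neg, hexptr]
          field_simp
      _ ≤ Δ := hΔR
  have hC0' : (0 : ℝ) ≤ C₀ := by linarith
  set K := C₀ + C₁ with hK
  have hK0 : (0 : ℝ) < K := by rw [hK, hC1]; linarith
  have htpK : tr - tp ≤ K := by rw [hK]; linarith
  set M := max tp tr with hM
  have hMtp0 : tp ≤ M := le_max_left _ _
  have htrM : tr ≤ M := le_max_right _ _
  have hMtp : M - tp ≤ K := by
    have : M ≤ tp + K := max_le (by linarith) (by linarith)
    linarith
  set L := |M - tq| with hL
  have hL0 : 0 ≤ L := abs_nonneg _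
  -- |tp - tq| ≤ L + K and L ≤ |tp - tq| + K
  have habs1 : |tp - tq| ≤ L + (M - tp) := by
    calc |tp - tq| = |(tp - M) + (M - tq)| := by ring_nf
      _ ≤ |tp - M| + |M - tq| := abs_add_le _ _
      _ = (M - tp) + L := by rw [abs_of_nonpos (by linarith)]; ring
      _ = L + (M - tp) := by ring
  have habs2 : L ≤ |tp - tq| + (M - tp) := by
    calc L = |(M - tp) + (tp - tq)| := by ring_nf; exact hL
      _ ≤ |M - tp| + |tp - tq| := abs_add_le _ _
      _ = (M - tp) + |tp - tq| := by rw [abs_of_nonneg (by linarith)]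
      _ = |tp - tq| + (M - tp) := by ring
  constructor
  · -- hyperbolic distance estimate
    have hArw : hypDist (x, tp) (x', tq) =
        arcosh (Real.cosh (tp - tq) + 2 * Real.exp (2 * tr - tp - tq)) := by
      unfold hypDist
      congr 1
      have hD2 : D = 2 * Real.exp tr := by rw [hexptr]; ring
      have e1 : Real.exp (2 * tr - tp - tq) =
          Real.exp tr ^ 2 / (Real.exp tp * Real.exp tq) := by
        rw [show 2 * tr - tp - tq = tr + tr - tp - tq by ring, Real.exp_sub,
          Real.exp_sub, Real.exp_add, sq]
        ring
      have e2 : Real.cosh (tp - tq) =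
          (Real.exp tp / Real.exp tq + Real.exp tq / Real.exp tp) / 2 := by
        rw [Real.cosh_eq, Real.exp_sub, neg_sub, Real.exp_sub]
      show (1 : ℝ) + (D ^ 2 + (Real.exp tp - Real.exp tq) ^ 2) /
          (2 * Real.exp tp * Real.exp tq) = _
      rw [e1, e2, hD2]
      have hp := (Real.exp_pos tp).ne'
      have hq := (Real.exp_pos tq).ne'
      field_simp
      ring
    set A := Real.cosh (tp - tq) + 2 * Real.exp (2 * tr - tp - tq) with hA
    have hA1 : (1 : ℝ) ≤ A := by
      have := Real.one_le_cosh (tp - tq)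
      have := Real.exp_pos (2 * tr - tp - tq)
      rw [hA]; linarith
    -- lower bound
    have hlow : |tp - tq| ≤ hypDist (x, tp) (x', tq) := by
      rw [hArw, ← Real.cosh_abs (tp - tq)] at *
      calc |tp - tq| = arcosh (Real.cosh |tp - tq|) :=
            (arcosh_cosh _ (abs_nonneg _)).symm
        _ ≤ arcosh A := by
            apply arcosh_mono (Real.one_le_cosh _)
            rw [hA, Real.cosh_abs]
            have := Real.exp_pos (2 * tr - tp - tq)
            rw [← Real.cosh_abs (tp - tq)]
            linarith
    -- upper bound
    have hup : hypDist (x, tp) (x', tq) ≤ L + K + 2 := by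
      rw [hArw]
      have hb1 : Real.cosh (tp - tq) ≤ Real.exp (L + K) := by
        rw [Real.cosh_eq]
        have e1 : Real.exp (tp - tq) ≤ Real.exp (L + K) :=
          Real.exp_le_exp.mpr (by
            have := le_abs_self (tp - tq); linarith)
        have e2 : Real.exp (-(tp - tq)) ≤ Real.exp (L + K) :=
          Real.exp_le_exp.mpr (by
            have := neg_abs_le (tp - tq); linarith)
        linarith
      have hb2 : Real.exp (2 * tr - tp - tq) ≤ Real.exp (L + K) :=
        Real.exp_le_exp.mpr (by
          have h5 : M - tq ≤ L := le_abs_self _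
          linarith)
      have hA3 : A ≤ 3 * Real.exp (L + K) := by rw [hA]; linarith
      calc arcosh A ≤ Real.log (2 * A) := arcosh_le_log _ hA1
        _ ≤ Real.log (6 * Real.exp (L + K)) :=
            Real.log_le_log (by linarith) (by linarith)
        _ = Real.log 6 + (L + K) := by
            rw [Real.log_mul (by norm_num) (Real.exp_ne_zero _), Real.log_exp]
        _ ≤ L + K + 2 := by
            have h6 : Real.log 6 ≤ 2 := by
              rw [show (2 : ℝ) = Real.log (Real.exp 2) by rw [Real.log_exp]]
              apply Real.log_le_log (by norm_num)
              have he := Real.exp_one_gt_d9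
              have : Real.exp 2 = Real.exp 1 * Real.exp 1 := by
                rw [← Real.exp_add]; norm_num
              nlinarith
            linarith
    rw [abs_le]
    constructor
    · linarith
    · linarith
  · -- X-distance estimate
    have ha : dist (F (x, tp)) (F (x, M)) = M - tp := by
      rw [h1 x tp M, abs_of_nonpos (by linarith)]; ring
    have hc : dist (F (x', M)) (F (x', tq)) = L := by rw [h1 x' M tq]
    have hb : dist (F (x, M)) (F (x', M)) ≤ 2 * R / ε + R := by
      have hexp : Real.exp (-M) * D ≤ 2 := by
        have : Real.exp (-M) ≤ Real.exp (-tr) := Real.exp_le_exp.mpr (by linarith)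
        have h2 : Real.exp (-tr) * D = 2 := by
          rw [Real.exp_neg, hexptr]; field_simp
        have h3' : 0 < Real.exp (-M) := Real.exp_pos _
        calc Real.exp (-M) * D ≤ Real.exp (-tr) * D :=
              mul_le_mul_of_nonneg_right this (le_of_lt hD)
          _ = 2 := h2
      calc dist (F (x, M)) (F (x', M)) ≤ (R / ε) * (Real.exp (-M) * D) + R :=
            h3 x x' M
        _ ≤ (R / ε) * 2 + R := by
            have h0 : 0 ≤ R / ε := le_of_lt (div_pos hR hε)
            have := mul_le_mul_of_nonneg_left hexp h0
            linarith
        _ = 2 * R / ε + R := by ring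
    have hT1 : dist (F (x, tp)) (F (x', tq)) ≤ (M - tp) + (2 * R / ε + R) + L := by
      calc dist (F (x, tp)) (F (x', tq))
          ≤ dist (F (x, tp)) (F (x, M)) + dist (F (x, M)) (F (x', M)) +
            dist (F (x', M)) (F (x', tq)) := dist_triangle4 _ _ _ _
        _ ≤ (M - tp) + (2 * R / ε + R) + L := by rw [ha, hc]; linarith
    have hT2 : L ≤ dist (F (x, tp)) (F (x', tq)) + (M - tp) + (2 * R / ε + R) := by
      calc L = dist (F (x', M)) (F (x', tq)) := hc.symm
        _ ≤ dist (F (x', M)) (F (x, M)) + dist (F (x, M)) (F (x, tp)) +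
            dist (F (x, tp)) (F (x', tq)) := dist_triangle4 _ _ _ _
        _ ≤ dist (F (x, tp)) (F (x', tq)) + (M - tp) + (2 * R / ε + R) := by
            rw [dist_comm (F (x', M)) (F (x, M)), dist_comm (F (x, M)) (F (x, tp)), ha]
            linarith
    rw [abs_le]
    constructor
    · linarith
    · linarith
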